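/- For each i ∈ {1,…,7}, the image of the open rectangle int(Σᵢ) × (1+√2, ∞) under F̂ is the product of (-∞, 1+√2) with the open interval γ[int(Σ_{j(i)})] ⊆ (1+√2, ∞), where j(i) is determined by νᵢ[Σ₀] = Σ_{j(i)} (explicitly j(i) = i for i ≠ 2, 6, j(2) = 6 and j(6) = 2); in particular these seven images are pairwise disjoint, F̂ is injective on each of these rectangles, and the complement of the union of the seven images inside (-∞, 1+√2) × (1+√2, ∞) is a Lebesgue-null set. -/

import Mathlib

open MeasureTheory Set

noncomputable section

/-- The linear fractional transformation of `ℝ` induced by a 2×2 real matrix,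
with the convention that the value is `0` when the denominator vanishes. -/
def mob (M : Matrix (Fin 2) (Fin 2) ℝ) (u : ℝ) : ℝ :=
  (M 0 0 * u + M 0 1) / (M 1 0 * u + M 1 1)

/-- The matrix `γ = [[-1, 2+2√2],[0,1]]`. -/
def gam : Matrix (Fin 2) (Fin 2) ℝ := !![-1, 2 + 2 * Real.sqrt 2; 0, 1]

/-- The isometries `ν₁, …, ν₇` of the octagon. -/
def nu : ℕ → Matrix (Fin 2) (Fin 2) ℝ
  | 1 => (Real.sqrt 2)⁻¹ • !![1, 1; 1, -1]
  | 2 => (Real.sqrt 2)⁻¹ • !![1, 1; -1, 1]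
  | 3 => !![0, 1; 1, 0]
  | 4 => !![0, 1; -1, 0]
  | 5 => (Real.sqrt 2)⁻¹ • !![-1, 1; 1, 1]
  | 6 => (Real.sqrt 2)⁻¹ • !![-1, 1; -1, -1]
  | 7 => !![-1, 0; 0, 1]
  | _ => 1

/-- The index `i` of the sector `Σᵢ` (in inverse-slope coordinates) containing `u`:
`Σ₀ = (1+√2, ∞)`, `Σ₁ = (1, 1+√2]`, `Σ₂ = (√2-1, 1]`, `Σ₃ = (0, √2-1]`, `Σ₄ = (1-√2, 0]`,
`Σ₅ = (-1, 1-√2]`, `Σ₆ = (-1-√2, -1]`, `Σ₇ = (-∞, -1-√2]`. -/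
def sectorIndex (u : ℝ) : ℕ :=
  if 1 + Real.sqrt 2 < u then 0
  else if 1 < u then 1
  else if Real.sqrt 2 - 1 < u then 2
  else if 0 < u then 3
  else if 1 - Real.sqrt 2 < u then 4
  else if -1 < u then 5
  else if -(1 + Real.sqrt 2) < u then 6
  else 7

/-- The octagon Farey map in inverse-slope coordinates: `F(u) = (γ·νᵢ)[u]` for `u ∈ Σᵢ`
(`i = 1,…,7`), and `F(u) = u` for `u ∈ Σ₀`. -/
def F (u : ℝ) : ℝ :=
  if sectorIndex u = 0 then u else mob (gam * nu (sectorIndex u)) u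

/-- The natural extension of the octagon Farey map. -/
def Fhat (p : ℝ × ℝ) : ℝ × ℝ :=
  if sectorIndex p.1 = 0 then p
  else (mob (gam * nu (sectorIndex p.1)) p.1, mob (gam * nu (sectorIndex p.1)) p.2)

/-- The interiors of the sectors `Σ₁, …, Σ₇`. -/
def sInt : ℕ → Set ℝ
  | 1 => Set.Ioo 1 (1 + Real.sqrt 2)
  | 2 => Set.Ioo (Real.sqrt 2 - 1) 1
  | 3 => Set.Ioo 0 (Real.sqrt 2 - 1)
  | 4 => Set.Ioo (1 - Real.sqrt 2) 0
  | 5 => Set.Ioo (-1) (1 - Real.sqrt 2)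
  | 6 => Set.Ioo (-(1 + Real.sqrt 2)) (-1)
  | 7 => Set.Iio (-(1 + Real.sqrt 2))
  | _ => ∅

/-- The index `j(i)` determined by `νᵢ[Σ₀] = Σ_{j(i)}`: `j(i) = i` for `i ≠ 2, 6`,
`j(2) = 6` and `j(6) = 2`. -/
def jmap (i : ℕ) : ℕ := if i = 2 then 6 else if i = 6 then 2 else i

local notation "R2" => Real.sqrt 2

lemma sq2 : R2 ^ 2 = 2 := Real.sq_sqrt (by norm_num)
lemma s_gt : 1 < R2 := by nlinarith [sq2, Real.sqrt_nonneg 2]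
lemma s_lt : R2 < 3/2 := by nlinarith [sq2, Real.sqrt_nonneg 2]
lemma sqrt2_ne : R2 ≠ 0 := by positivity

-- mob of the diagonal action
lemma mob_smul {c : ℝ} (hc : c ≠ 0) (M : Matrix (Fin 2) (Fin 2) ℝ) (u : ℝ) :
    mob (c • M) u = mob M u := by
  simp only [mob, Matrix.smul_apply, smul_eq_mul]
  rw [show c * M 0 0 * u + c * M 0 1 = c * (M 0 0 * u + M 0 1) from by ring,
      show c * M 1 0 * u + c * M 1 1 = c * (M 1 0 * u + M 1 1) from by ring]
  exact mul_div_mul_left _ _ hc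

lemma frac_pf {a b e k p u : ℝ} (hu : u ≠ p) (h : ∀ x : ℝ, a * x + b = e * (x - p) + k) :
    (a * u + b) / (u - p) = e + k / (u - p) := by
  have hd : u - p ≠ 0 := sub_ne_zero.mpr hu
  rw [h u]
  field_simp

lemma div_eq_div_neg {A B C D : ℝ} (h1 : A = -C) (h2 : B = -D) : A / B = C / D := by
  rw [h1, h2, neg_div_neg_eq]

-- the seven maps in partial fraction form
lemma f1_eq {u : ℝ} (hu : u ≠ 1) :
    mob (gam * nu 1) u = (1 + 2*R2) + (-2) / (u - 1) := by
  rw [show nu 1 = (R2)⁻¹ • !![1, 1; 1, -1] from rfl, Matrix.mul_smul,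
    mob_smul (inv_ne_zero sqrt2_ne)]
  have : mob (gam * !![1, 1; 1, -1]) u = ((1 + 2*R2) * u + -(3 + 2*R2)) / (u - 1) := by
    simp only [mob, gam, Matrix.mul_apply, Fin.sum_univ_two]
    norm_num [Matrix.cons_val_zero, Matrix.cons_val_one]
    all_goals (congr 1 <;> ring)
  rw [this]
  exact frac_pf hu (by intro x; ring)

lemma f2_eq {u : ℝ} (hu : u ≠ 1) :
    mob (gam * nu 2) u = (3 + 2*R2) + 2 / (u - 1) := by
  rw [show nu 2 = (R2)⁻¹ • !![1, 1; -1, 1] from rfl, Matrix.mul_smul,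
    mob_smul (inv_ne_zero sqrt2_ne)]
  have : mob (gam * !![1, 1; -1, 1]) u = ((3 + 2*R2) * u + -(1 + 2*R2)) / (u - 1) := by
    simp only [mob, gam, Matrix.mul_apply, Fin.sum_univ_two]
    norm_num [Matrix.cons_val_zero, Matrix.cons_val_one]
    all_goals exact div_eq_div_neg (by ring) (by ring)
  rw [this]
  exact frac_pf hu (by intro x; ring)

lemma f3_eq {u : ℝ} (hu : u ≠ 0) :
    mob (gam * nu 3) u = (2 + 2*R2) + (-1) / (u - 0) := by
  have : mob (gam * nu 3) u = ((2 + 2*R2) * u + -1) / (u - 0) := by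
    simp only [mob, gam, nu, Matrix.mul_apply, Fin.sum_univ_two]
    norm_num [Matrix.cons_val_zero, Matrix.cons_val_one]
    all_goals (congr 1 <;> ring)
  rw [this]
  exact frac_pf hu (by intro x; ring)

lemma f4_eq {u : ℝ} (hu : u ≠ 0) :
    mob (gam * nu 4) u = (2 + 2*R2) + 1 / (u - 0) := by
  have : mob (gam * nu 4) u = ((2 + 2*R2) * u + 1) / (u - 0) := by
    simp only [mob, gam, nu, Matrix.mul_apply, Fin.sum_univ_two]
    norm_num [Matrix.cons_val_zero, Matrix.cons_val_one]
    all_goals exact div_eq_div_neg (by ring) (by ring)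
  rw [this]
  exact frac_pf hu (by intro x; ring)

lemma f5_eq {u : ℝ} (hu : u ≠ -1) :
    mob (gam * nu 5) u = (3 + 2*R2) + (-2) / (u - (-1)) := by
  rw [show nu 5 = (R2)⁻¹ • !![-1, 1; 1, 1] from rfl, Matrix.mul_smul,
    mob_smul (inv_ne_zero sqrt2_ne)]
  have : mob (gam * !![-1, 1; 1, 1]) u = ((3 + 2*R2) * u + (1 + 2*R2)) / (u - (-1)) := by
    simp only [mob, gam, Matrix.mul_apply, Fin.sum_univ_two]
    norm_num [Matrix.cons_val_zero, Matrix.cons_val_one]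
    all_goals (congr 1 <;> ring)
  rw [this]
  exact frac_pf hu (by intro x; ring)

lemma f6_eq {u : ℝ} (hu : u ≠ -1) :
    mob (gam * nu 6) u = (1 + 2*R2) + 2 / (u - (-1)) := by
  rw [show nu 6 = (R2)⁻¹ • !![-1, 1; -1, -1] from rfl, Matrix.mul_smul,
    mob_smul (inv_ne_zero sqrt2_ne)]
  have : mob (gam * !![-1, 1; -1, -1]) u = ((1 + 2*R2) * u + (3 + 2*R2)) / (u - (-1)) := by
    simp only [mob, gam, Matrix.mul_apply, Fin.sum_univ_two]
    norm_num [Matrix.cons_val_zero, Matrix.cons_val_one]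
    all_goals exact div_eq_div_neg (by ring) (by ring)
  rw [this]
  exact frac_pf hu (by intro x; ring)

lemma f7_eq (u : ℝ) : mob (gam * nu 7) u = u + (2 + 2*R2) := by
  simp only [mob, gam, nu, Matrix.mul_apply, Fin.sum_univ_two]
  norm_num [Matrix.cons_val_zero, Matrix.cons_val_one]

lemma mobgam (u : ℝ) : mob gam u = (2 + 2*R2) - u := by
  simp only [mob, gam]
  norm_num [Matrix.cons_val_zero, Matrix.cons_val_one]
  ring

/-- image of `u ↦ e + k/(u-p)` on `(p,q)`, `k<0`: all of `(-∞, e + k/(q-p))`. -/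
lemma imgL1 {e k p q : ℝ} (hk : k < 0) (hpq : p < q) :
    (fun u => e + k / (u - p)) '' Ioo p q = Iio (e + k / (q - p)) := by
  have hkne : k ≠ 0 := ne_of_lt hk
  ext y
  simp only [mem_image, mem_Ioo, mem_Iio]
  constructor
  · rintro ⟨u, ⟨h1, h2⟩, rfl⟩
    have h3 : 0 < u - p := by linarith
    have h4 : 0 < q - p := by linarith
    have : k / (u - p) < k / (q - p) := by
      rw [div_lt_div_iff₀ h3 h4]; nlinarith
    linarith
  · intro hy
    have h4 : 0 < q - p := by linarith
    have hkq : k / (q - p) < 0 := div_neg_of_neg_of_pos hk h4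
    have ht0 : y - e < k / (q - p) := by linarith
    have htneg : y - e < 0 := by linarith
    have htne : y - e ≠ 0 := ne_of_lt htneg
    refine ⟨p + k / (y - e), ⟨?_, ?_⟩, ?_⟩
    · have : 0 < k / (y - e) := div_pos_of_neg_of_neg hk htneg
      linarith
    · have h5 : (y - e) * (q - p) < k := by rwa [lt_div_iff₀ h4] at ht0
      have : k / (y - e) < q - p := by
        rw [div_lt_iff_of_neg htneg]; nlinarith
      linarith
    · have : p + k / (y - e) - p = k / (y - e) := by ring
      rw [this]
      field_simp
      ring
  
/-- image of `u ↦ e + k/(u-p)` on `(q,∞)`, `q>p`, `k<0`: `(e + k/(q-p), e)`. -/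
lemma imgL3 {e k p q : ℝ} (hk : k < 0) (hpq : p < q) :
    (fun u => e + k / (u - p)) '' Ioi q = Ioo (e + k / (q - p)) e := by
  have hkne : k ≠ 0 := ne_of_lt hk
  ext y
  simp only [mem_image, mem_Ioi, mem_Ioo]
  constructor
  · rintro ⟨u, hu, rfl⟩
    have h3 : 0 < u - p := by linarith
    have h4 : 0 < q - p := by linarith
    constructor
    · have : k / (q - p) < k / (u - p) := by
        rw [div_lt_div_iff₀ h4 h3]; nlinarith
      linarith
    · have : k / (u - p) < 0 := div_neg_of_neg_of_pos hk h3
      linarith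
  · rintro ⟨hy1, hy2⟩
    have h4 : 0 < q - p := by linarith
    have htneg : y - e < 0 := by linarith
    have htne : y - e ≠ 0 := ne_of_lt htneg
    refine ⟨p + k / (y - e), ?_, ?_⟩
    · have h5 : k < (y - e) * (q - p) := by
        have := hy1
        rw [show e + k/(q-p) < y ↔ k/(q-p) < y - e from by constructor <;> intro <;> linarith] at this
        rwa [div_lt_iff₀ h4] at this
      have : q - p < k / (y - e) := by
        rw [lt_div_iff_of_neg htneg]; nlinarith
      linarith
    · have : p + k / (y - e) - p = k / (y - e) := by ring
      rw [this]
      field_simp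
      ring

/-- image of `u ↦ e + k/(u-p)` on `(q,p)`, `k>0`: all of `(-∞, e + k/(q-p))`. -/
lemma imgL2 {e k p q : ℝ} (hk : 0 < k) (hqp : q < p) :
    (fun u => e + k / (u - p)) '' Ioo q p = Iio (e + k / (q - p)) := by
  have h := imgL1 (e := e) (k := -k) (p := -p) (q := -q) (by linarith) (by linarith)
  have himg : (fun u => e + k / (u - p)) '' Ioo q p
      = ((fun u => e + (-k) / (u - (-p))) ∘ (fun u => -u)) '' Ioo q p := by
    apply image_congr
    intro u _
    have : u - p = -(-u - -p) := by ring
    rw [Function.comp_apply, this, div_neg, neg_div]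
  rw [himg, image_comp, show (fun u : ℝ => -u) '' Ioo q p = Ioo (-p) (-q) from by
    ext x
    simp only [mem_image, mem_Ioo]
    constructor
    · rintro ⟨u, ⟨h1, h2⟩, rfl⟩
      exact ⟨by linarith, by linarith⟩
    · rintro ⟨h1, h2⟩
      exact ⟨-x, ⟨by linarith, by linarith⟩, by ring⟩, h]
  congr 1
  have h1 : -q - -p = -(q - p) := by ring
  rw [h1, div_neg, neg_div, neg_neg]

/-- image of `u ↦ e + k/(u-p)` on `(q,∞)`, `q>p`, `k>0`: `(e, e + k/(q-p))`. -/
lemma imgL4 {e k p q : ℝ} (hk : 0 < k) (hpq : p < q) :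
    (fun u => e + k / (u - p)) '' Ioi q = Ioo e (e + k / (q - p)) := by
  have hkne : k ≠ 0 := ne_of_gt hk
  ext y
  simp only [mem_image, mem_Ioi, mem_Ioo]
  constructor
  · rintro ⟨u, hu, rfl⟩
    have h3 : 0 < u - p := by linarith
    have h4 : 0 < q - p := by linarith
    constructor
    · have : 0 < k / (u - p) := div_pos hk h3
      linarith
    · have : k / (u - p) < k / (q - p) := by
        rw [div_lt_div_iff₀ h3 h4]; nlinarith
      linarith
  · rintro ⟨hy1, hy2⟩
    have h4 : 0 < q - p := by linarith
    have htpos : 0 < y - e := by linarith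
    have htne : y - e ≠ 0 := ne_of_gt htpos
    refine ⟨p + k / (y - e), ?_, ?_⟩
    · have h5 : (y - e) * (q - p) < k := by
        have : y - e < k / (q - p) := by linarith
        rwa [lt_div_iff₀ h4] at this
      have : q - p < k / (y - e) := by
        rw [lt_div_iff₀ htpos]; nlinarith
      linarith
    · have : p + k / (y - e) - p = k / (y - e) := by ring
      rw [this]
      field_simp
      ring

lemma g_inj {e k p : ℝ} (hk : k ≠ 0) : InjOn (fun u => e + k / (u - p)) {u | u ≠ p} := by
  intro u hu v hv h
  simp only [mem_setOf_eq] at hu hv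
  have h1 : u - p ≠ 0 := sub_ne_zero.mpr hu
  have h2 : v - p ≠ 0 := sub_ne_zero.mpr hv
  simp only at h
  have h3 : k / (u - p) = k / (v - p) := by linarith
  rw [div_eq_div_iff h1 h2] at h3
  have h4 : v - p = u - p := mul_left_cancel₀ hk h3
  linarith

-- sector index lemmas
lemma sec1 {u : ℝ} (h : u ∈ sInt 1) : sectorIndex u = 1 := by
  obtain ⟨h1, h2⟩ := h
  simp only [sectorIndex]
  rw [if_neg (by linarith), if_pos h1]

lemma sec2 {u : ℝ} (h : u ∈ sInt 2) : sectorIndex u = 2 := by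
  obtain ⟨h1, h2⟩ := h
  have := s_gt
  simp only [sectorIndex]
  rw [if_neg (by linarith), if_neg (by linarith), if_pos h1]

lemma sec3 {u : ℝ} (h : u ∈ sInt 3) : sectorIndex u = 3 := by
  obtain ⟨h1, h2⟩ := h
  have := s_gt; have := s_lt
  simp only [sectorIndex]
  rw [if_neg (by linarith), if_neg (by linarith), if_neg (by linarith), if_pos h1]

lemma sec4 {u : ℝ} (h : u ∈ sInt 4) : sectorIndex u = 4 := by
  obtain ⟨h1, h2⟩ := h
  have := s_gt; have := s_lt
  simp only [sectorIndex]
  rw [if_neg (by linarith), if_neg (by linarith), if_neg (by linarith), if_neg (by linarith),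
    if_pos h1]

lemma sec5 {u : ℝ} (h : u ∈ sInt 5) : sectorIndex u = 5 := by
  obtain ⟨h1, h2⟩ := h
  have := s_gt; have := s_lt
  simp only [sectorIndex]
  rw [if_neg (by linarith), if_neg (by linarith), if_neg (by linarith), if_neg (by linarith),
    if_neg (by linarith), if_pos h1]

lemma sec6 {u : ℝ} (h : u ∈ sInt 6) : sectorIndex u = 6 := by
  obtain ⟨h1, h2⟩ := h
  have := s_gt; have := s_lt
  simp only [sectorIndex]
  rw [if_neg (by linarith), if_neg (by linarith), if_neg (by linarith), if_neg (by linarith),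
    if_neg (by linarith), if_neg (by linarith), if_pos h1]

lemma sec7 {u : ℝ} (h : u ∈ sInt 7) : sectorIndex u = 7 := by
  have h1 : u < -(1 + R2) := h
  have := s_gt; have := s_lt
  simp only [sectorIndex]
  rw [if_neg (by linarith), if_neg (by linarith), if_neg (by linarith), if_neg (by linarith),
    if_neg (by linarith), if_neg (by linarith), if_neg (by linarith)]

-- main bullet helper
lemma bullet {i : ℕ} (hi0 : i ≠ 0) {f : ℝ → ℝ} {T : Set ℝ}
    (hsec : ∀ u ∈ sInt i, sectorIndex u = i)
    (hmob : ∀ u ∈ sInt i ∪ Ioi (1 + R2), mob (gam * nu i) u = f u)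
    (hinj : Set.InjOn f (sInt i ∪ Ioi (1 + R2)))
    (h1 : f '' sInt i = Iio (1 + R2))
    (h2 : f '' Ioi (1 + R2) = T) :
    Fhat '' (sInt i ×ˢ Ioi (1 + R2)) = Iio (1 + R2) ×ˢ T ∧
      Set.InjOn Fhat (sInt i ×ˢ Ioi (1 + R2)) := by
  have hF : ∀ u ∈ sInt i, ∀ v ∈ Ioi (1 + R2), Fhat (u, v) = (f u, f v) := by
    intro u hu v hv
    have h := hsec u hu
    simp only [Fhat]
    rw [h, if_neg hi0, hmob u (Or.inl hu), hmob v (Or.inr hv)]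
  constructor
  · ext ⟨x, y⟩
    simp only [mem_image, mem_prod, Prod.exists]
    constructor
    · rintro ⟨u, v, ⟨hu, hv⟩, he⟩
      rw [hF u hu v hv] at he
      obtain ⟨e1, e2⟩ := Prod.mk.injEq .. ▸ he
      exact ⟨e1 ▸ h1 ▸ mem_image_of_mem f hu, e2 ▸ h2 ▸ mem_image_of_mem f hv⟩
    · rintro ⟨hx, hy⟩
      rw [← h1] at hx; rw [← h2] at hy
      obtain ⟨u, hu, rfl⟩ := hx
      obtain ⟨v, hv, rfl⟩ := hy
      exact ⟨u, v, ⟨hu, hv⟩, hF u hu v hv⟩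
  · rintro ⟨u, v⟩ ⟨hu, hv⟩ ⟨u', v'⟩ ⟨hu', hv'⟩ he
    rw [hF u hu v hv, hF u' hu' v' hv'] at he
    obtain ⟨e1, e2⟩ := Prod.mk.injEq .. ▸ he
    exact Prod.ext (hinj (Or.inl hu) (Or.inl hu') e1) (hinj (Or.inr hv) (Or.inr hv') e2)

-- images under mob gam
lemma gamImg1 : mob gam '' sInt 1 = Ioo (1 + R2) (1 + 2*R2) := by
  rw [show sInt 1 = Ioo 1 (1 + R2) from rfl, image_congr (fun u _ => mobgam u),
    Set.image_const_sub_Ioo]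
  congr 1 <;> ring

lemma gamImg2 : mob gam '' sInt 2 = Ioo (1 + 2*R2) (3 + R2) := by
  rw [show sInt 2 = Ioo (R2 - 1) 1 from rfl, image_congr (fun u _ => mobgam u),
    Set.image_const_sub_Ioo]
  congr 1 <;> ring

lemma gamImg3 : mob gam '' sInt 3 = Ioo (3 + R2) (2 + 2*R2) := by
  rw [show sInt 3 = Ioo 0 (R2 - 1) from rfl, image_congr (fun u _ => mobgam u),
    Set.image_const_sub_Ioo]
  congr 1 <;> ring

lemma gamImg4 : mob gam '' sInt 4 = Ioo (2 + 2*R2) (1 + 3*R2) := by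
  rw [show sInt 4 = Ioo (1 - R2) 0 from rfl, image_congr (fun u _ => mobgam u),
    Set.image_const_sub_Ioo]
  congr 1 <;> ring

lemma gamImg5 : mob gam '' sInt 5 = Ioo (1 + 3*R2) (3 + 2*R2) := by
  rw [show sInt 5 = Ioo (-1) (1 - R2) from rfl, image_congr (fun u _ => mobgam u),
    Set.image_const_sub_Ioo]
  congr 1 <;> ring

lemma gamImg6 : mob gam '' sInt 6 = Ioo (3 + 2*R2) (3 + 3*R2) := by
  rw [show sInt 6 = Ioo (-(1 + R2)) (-1) from rfl, image_congr (fun u _ => mobgam u),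
    Set.image_const_sub_Ioo]
  congr 1 <;> ring

lemma gamImg7 : mob gam '' sInt 7 = Ioi (3 + 3*R2) := by
  rw [show sInt 7 = Iio (-(1 + R2)) from rfl, image_congr (fun u _ => mobgam u),
    Set.image_const_sub_Iio]
  congr 1
  ring

lemma ne1 {u : ℝ} (hu : u ∈ sInt 1 ∪ Ioi (1 + R2)) : u ≠ 1 := by
  have := s_gt
  rcases hu with hu | hu
  · exact ne_of_gt hu.1
  · have h : 1 + R2 < u := hu; intro h'; rw [h'] at h; linarith

lemma ne2 {u : ℝ} (hu : u ∈ sInt 2 ∪ Ioi (1 + R2)) : u ≠ 1 := by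
  have := s_gt
  rcases hu with hu | hu
  · exact ne_of_lt hu.2
  · have h : 1 + R2 < u := hu; intro h'; rw [h'] at h; linarith

lemma ne3 {u : ℝ} (hu : u ∈ sInt 3 ∪ Ioi (1 + R2)) : u ≠ 0 := by
  have := s_gt
  rcases hu with hu | hu
  · exact ne_of_gt hu.1
  · have h : 1 + R2 < u := hu; intro h'; rw [h'] at h; linarith

lemma ne4 {u : ℝ} (hu : u ∈ sInt 4 ∪ Ioi (1 + R2)) : u ≠ 0 := by
  have := s_gt
  rcases hu with hu | hu
  · exact ne_of_lt hu.2
  · have h : 1 + R2 < u := hu; intro h'; rw [h'] at h; linarith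

lemma ne5 {u : ℝ} (hu : u ∈ sInt 5 ∪ Ioi (1 + R2)) : u ≠ -1 := by
  have := s_gt
  rcases hu with hu | hu
  · exact ne_of_gt hu.1
  · have h : 1 + R2 < u := hu; intro h'; rw [h'] at h; linarith

lemma ne6 {u : ℝ} (hu : u ∈ sInt 6 ∪ Ioi (1 + R2)) : u ≠ -1 := by
  have := s_gt
  rcases hu with hu | hu
  · exact ne_of_lt hu.2
  · have h : 1 + R2 < u := hu; intro h'; rw [h'] at h; linarith

lemma main1 : Fhat '' (sInt 1 ×ˢ Ioi (1 + R2)) = Iio (1 + R2) ×ˢ (mob gam '' sInt (jmap 1)) ∧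
    InjOn Fhat (sInt 1 ×ˢ Ioi (1 + R2)) := by
  have hs := s_gt
  have hq : (1:ℝ) < 1 + R2 := by linarith
  have hd : R2 ≠ 0 := sqrt2_ne
  have e1 : 1 + 2*R2 + -2 / (1 + R2 - 1) = 1 + R2 := by
    rw [show 1 + R2 - 1 = R2 from by ring]; field_simp; ring_nf; all_goals linarith [sq2]
  refine bullet (f := fun u => (1 + 2*R2) + (-2)/(u - 1)) (by norm_num)
    (fun u hu => sec1 hu) (fun u hu => f1_eq (ne1 hu))
    ((g_inj (by norm_num)).mono (fun u hu => ne1 hu)) ?_ ?_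
  · rw [show sInt 1 = Ioo 1 (1 + R2) from rfl, imgL1 (by norm_num) hq, e1]
  · rw [show jmap 1 = 1 from by simp [jmap], gamImg1, imgL3 (by norm_num) hq, e1]

lemma main2 : Fhat '' (sInt 2 ×ˢ Ioi (1 + R2)) = Iio (1 + R2) ×ˢ (mob gam '' sInt (jmap 2)) ∧
    InjOn Fhat (sInt 2 ×ˢ Ioi (1 + R2)) := by
  have hs := s_gt
  have hs' := s_lt
  have hq : (1:ℝ) < 1 + R2 := by linarith
  have hd : R2 ≠ 0 := sqrt2_ne
  have e1 : 3 + 2*R2 + 2 / (R2 - 1 - 1) = 1 + R2 := by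
    rw [show R2 - 1 - 1 = R2 - 2 from by ring]
    have hne : R2 - 2 ≠ 0 := ne_of_lt (by linarith)
    field_simp; ring_nf; all_goals linarith [sq2]
  have e2 : 3 + 2*R2 + 2 / (1 + R2 - 1) = 3 + 3*R2 := by
    rw [show 1 + R2 - 1 = R2 from by ring]; field_simp; ring_nf; all_goals linarith [sq2]
  refine bullet (f := fun u => (3 + 2*R2) + 2/(u - 1)) (by norm_num)
    (fun u hu => sec2 hu) (fun u hu => f2_eq (ne2 hu))
    ((g_inj (by norm_num)).mono (fun u hu => ne2 hu)) ?_ ?_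
  · rw [show sInt 2 = Ioo (R2 - 1) 1 from rfl, imgL2 (by norm_num) (by linarith), e1]
  · rw [show jmap 2 = 6 from by simp [jmap], gamImg6, imgL4 (by norm_num) hq, e2]

lemma main3 : Fhat '' (sInt 3 ×ˢ Ioi (1 + R2)) = Iio (1 + R2) ×ˢ (mob gam '' sInt (jmap 3)) ∧
    InjOn Fhat (sInt 3 ×ˢ Ioi (1 + R2)) := by
  have hs := s_gt
  have hs' := s_lt
  have hd : R2 ≠ 0 := sqrt2_ne
  have e1 : 2 + 2*R2 + -1 / (R2 - 1 - 0) = 1 + R2 := by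
    rw [show R2 - 1 - 0 = R2 - 1 from by ring]
    have hne : R2 - 1 ≠ 0 := ne_of_gt (by linarith)
    field_simp; ring_nf; all_goals linarith [sq2]
  have e2 : 2 + 2*R2 + -1 / (1 + R2 - 0) = 3 + R2 := by
    rw [show 1 + R2 - 0 = 1 + R2 from by ring]
    have hne : 1 + R2 ≠ 0 := by positivity
    field_simp; ring_nf; all_goals linarith [sq2]
  refine bullet (f := fun u => (2 + 2*R2) + (-1)/(u - 0)) (by norm_num)
    (fun u hu => sec3 hu) (fun u hu => f3_eq (ne3 hu))
    ((g_inj (by norm_num)).mono (fun u hu => ne3 hu)) ?_ ?_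
  · rw [show sInt 3 = Ioo 0 (R2 - 1) from rfl, imgL1 (by norm_num) (by linarith), e1]
  · rw [show jmap 3 = 3 from by simp [jmap], gamImg3, imgL3 (by norm_num) (by linarith), e2]

lemma main4 : Fhat '' (sInt 4 ×ˢ Ioi (1 + R2)) = Iio (1 + R2) ×ˢ (mob gam '' sInt (jmap 4)) ∧
    InjOn Fhat (sInt 4 ×ˢ Ioi (1 + R2)) := by
  have hs := s_gt
  have hs' := s_lt
  have hd : R2 ≠ 0 := sqrt2_ne
  have e1 : 2 + 2*R2 + 1 / (1 - R2 - 0) = 1 + R2 := by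
    rw [show 1 - R2 - 0 = 1 - R2 from by ring]
    have hne : 1 - R2 ≠ 0 := ne_of_lt (by linarith)
    field_simp; ring_nf; all_goals linarith [sq2]
  have e2 : 2 + 2*R2 + 1 / (1 + R2 - 0) = 1 + 3*R2 := by
    rw [show 1 + R2 - 0 = 1 + R2 from by ring]
    have hne : 1 + R2 ≠ 0 := by positivity
    field_simp; ring_nf; all_goals linarith [sq2]
  refine bullet (f := fun u => (2 + 2*R2) + 1/(u - 0)) (by norm_num)
    (fun u hu => sec4 hu) (fun u hu => f4_eq (ne4 hu))
    ((g_inj (by norm_num)).mono (fun u hu => ne4 hu)) ?_ ?_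
  · rw [show sInt 4 = Ioo (1 - R2) 0 from rfl, imgL2 (by norm_num) (by linarith), e1]
  · rw [show jmap 4 = 4 from by simp [jmap], gamImg4, imgL4 (by norm_num) (by linarith), e2]

lemma main5 : Fhat '' (sInt 5 ×ˢ Ioi (1 + R2)) = Iio (1 + R2) ×ˢ (mob gam '' sInt (jmap 5)) ∧
    InjOn Fhat (sInt 5 ×ˢ Ioi (1 + R2)) := by
  have hs := s_gt
  have hs' := s_lt
  have hd : R2 ≠ 0 := sqrt2_ne
  have e1 : 3 + 2*R2 + -2 / (1 - R2 - -1) = 1 + R2 := by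
    rw [show 1 - R2 - -1 = 2 - R2 from by ring]
    have hne : 2 - R2 ≠ 0 := ne_of_gt (by linarith)
    field_simp; ring_nf; all_goals linarith [sq2]
  have e2 : 3 + 2*R2 + -2 / (1 + R2 - -1) = 1 + 3*R2 := by
    rw [show 1 + R2 - -1 = 2 + R2 from by ring]
    have hne : 2 + R2 ≠ 0 := by positivity
    field_simp; ring_nf; all_goals linarith [sq2]
  refine bullet (f := fun u => (3 + 2*R2) + (-2)/(u - (-1))) (by norm_num)
    (fun u hu => sec5 hu) (fun u hu => f5_eq (ne5 hu))
    ((g_inj (by norm_num)).mono (fun u hu => ne5 hu)) ?_ ?_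
  · rw [show sInt 5 = Ioo (-1) (1 - R2) from rfl, imgL1 (by norm_num) (by linarith), e1]
  · rw [show jmap 5 = 5 from by simp [jmap], gamImg5, imgL3 (by norm_num) (by linarith), e2]

lemma main6 : Fhat '' (sInt 6 ×ˢ Ioi (1 + R2)) = Iio (1 + R2) ×ˢ (mob gam '' sInt (jmap 6)) ∧
    InjOn Fhat (sInt 6 ×ˢ Ioi (1 + R2)) := by
  have hs := s_gt
  have hs' := s_lt
  have hd : R2 ≠ 0 := sqrt2_ne
  have e1 : 1 + 2*R2 + 2 / (-(1 + R2) - -1) = 1 + R2 := by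
    rw [show -(1 + R2) - -1 = -R2 from by ring]
    have hne : -R2 ≠ 0 := by simpa using hd
    field_simp; ring_nf; all_goals linarith [sq2]
  have e2 : 1 + 2*R2 + 2 / (1 + R2 - -1) = 3 + R2 := by
    rw [show 1 + R2 - -1 = 2 + R2 from by ring]
    have hne : 2 + R2 ≠ 0 := by positivity
    field_simp; ring_nf; all_goals linarith [sq2]
  refine bullet (f := fun u => (1 + 2*R2) + 2/(u - (-1))) (by norm_num)
    (fun u hu => sec6 hu) (fun u hu => f6_eq (ne6 hu))
    ((g_inj (by norm_num)).mono (fun u hu => ne6 hu)) ?_ ?_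
  · rw [show sInt 6 = Ioo (-(1 + R2)) (-1) from rfl, imgL2 (by norm_num) (by linarith), e1]
  · rw [show jmap 6 = 2 from by simp [jmap], gamImg2, imgL4 (by norm_num) (by linarith), e2]

lemma main7 : Fhat '' (sInt 7 ×ˢ Ioi (1 + R2)) = Iio (1 + R2) ×ˢ (mob gam '' sInt (jmap 7)) ∧
    InjOn Fhat (sInt 7 ×ˢ Ioi (1 + R2)) := by
  refine bullet (f := fun u => u + (2 + 2*R2)) (by norm_num)
    (fun u hu => sec7 hu) (fun u _ => f7_eq u)
    (fun u _ u' _ h => by simpa using h) ?_ ?_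
  · rw [show sInt 7 = Iio (-(1 + R2)) from rfl, Set.image_add_const_Iio,
      show -(1 + R2) + (2 + 2*R2) = 1 + R2 from by ring]
  · rw [show jmap 7 = 7 from by simp [jmap], gamImg7, Set.image_add_const_Ioi,
      show 1 + R2 + (2 + 2*R2) = 3 + 3*R2 from by ring]

lemma dIoo {a b c d : ℝ} (h : b ≤ c) : Disjoint (Ioo a b) (Ioo c d) := by
  rw [Set.disjoint_left]
  rintro x ⟨h1, h2⟩ ⟨h3, h4⟩
  linarith

lemma dIooIoi {a b c : ℝ} (h : b ≤ c) : Disjoint (Ioo a b) (Ioi c) := by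
  rw [Set.disjoint_left]
  rintro x ⟨h1, h2⟩ h3
  have := mem_Ioi.mp h3
  linarith

lemma disj_prod {s t t' : Set ℝ} (h : Disjoint t t') : Disjoint (s ×ˢ t) (s ×ˢ t') := by
  rw [Set.disjoint_left] at h ⊢
  rintro ⟨x, y⟩ ⟨hx1, hy1⟩ ⟨hx2, hy2⟩
  exact h hy1 hy2

lemma gamSub : ∀ k : ℕ, 1 ≤ k → k ≤ 7 → mob gam '' sInt k ⊆ Ioi (1 + R2) := by
  have hs := s_gt
  intro k h1 h7
  interval_cases k <;>
    simp only [gamImg1, gamImg2, gamImg3, gamImg4, gamImg5, gamImg6, gamImg7] <;>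
    intro x hx <;>
    simp only [mem_Ioo, mem_Ioi] at hx ⊢ <;>
    first
      | linarith [hx.1]
      | linarith [hx]

lemma j1 : jmap 1 = 1 := rfl
lemma j2 : jmap 2 = 6 := rfl
lemma j3 : jmap 3 = 3 := rfl
lemma j4 : jmap 4 = 4 := rfl
lemma j5 : jmap 5 = 5 := rfl
lemma j6 : jmap 6 = 2 := rfl
lemma j7 : jmap 7 = 7 := rfl

lemma Jdisj : ∀ i i' : ℕ, 1 ≤ i → i ≤ 7 → 1 ≤ i' → i' ≤ 7 → i ≠ i' →
    Disjoint (mob gam '' sInt (jmap i)) (mob gam '' sInt (jmap i')) := by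
  have hs := s_gt
  have hs' := s_lt
  intro i i' h1 h2 h3 h4 h5
  interval_cases i <;> interval_cases i' <;>
    simp only [j1, j2, j3, j4, j5, j6, j7, gamImg1, gamImg2, gamImg3, gamImg4, gamImg5,
      gamImg6, gamImg7] <;>
    first
      | exact absurd rfl h5
      | exact dIoo (by linarith)
      | exact (dIoo (by linarith)).symm
      | exact dIooIoi (by linarith)
      | exact (dIooIoi (by linarith)).symm

/-- For each `i ∈ {1,…,7}`, the image of `int(Σᵢ) × (1+√2, ∞)` under `F̂` is
`(-∞, 1+√2) × γ[int(Σ_{j(i)})]`, with `γ[int(Σ_{j(i)})] ⊆ (1+√2, ∞)`; `F̂` is injective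
on each of these rectangles, the seven images are pairwise disjoint, and their union fills
`(-∞, 1+√2) × (1+√2, ∞)` up to a Lebesgue-null set. -/
theorem Fhat_image_rectangles :
    (∀ i : ℕ, 1 ≤ i → i ≤ 7 →
      Fhat '' (sInt i ×ˢ Set.Ioi (1 + Real.sqrt 2)) =
        Set.Iio (1 + Real.sqrt 2) ×ˢ (mob gam '' sInt (jmap i)) ∧
      mob gam '' sInt (jmap i) ⊆ Set.Ioi (1 + Real.sqrt 2) ∧
      Set.InjOn Fhat (sInt i ×ˢ Set.Ioi (1 + Real.sqrt 2))) ∧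
    (∀ i i' : ℕ, 1 ≤ i → i ≤ 7 → 1 ≤ i' → i' ≤ 7 → i ≠ i' →
      Disjoint (Fhat '' (sInt i ×ˢ Set.Ioi (1 + Real.sqrt 2)))
        (Fhat '' (sInt i' ×ˢ Set.Ioi (1 + Real.sqrt 2)))) ∧
    volume ((Set.Iio (1 + Real.sqrt 2) ×ˢ Set.Ioi (1 + Real.sqrt 2)) \
      ⋃ i ∈ Finset.Icc 1 7, Fhat '' (sInt i ×ˢ Set.Ioi (1 + Real.sqrt 2))) = 0 := by
  have himg : ∀ i : ℕ, 1 ≤ i → i ≤ 7 →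
      Fhat '' (sInt i ×ˢ Set.Ioi (1 + Real.sqrt 2)) =
        Set.Iio (1 + Real.sqrt 2) ×ˢ (mob gam '' sInt (jmap i)) := by
    intro i h1 h7
    interval_cases i
    exacts [main1.1, main2.1, main3.1, main4.1, main5.1, main6.1, main7.1]
  refine ⟨?_, ?_, ?_⟩
  · intro i h1 h7
    refine ⟨himg i h1 h7, ?_, ?_⟩
    · have hj : 1 ≤ jmap i ∧ jmap i ≤ 7 := by interval_cases i <;> simp [jmap]
      exact gamSub _ hj.1 hj.2
    · interval_cases i
      exacts [main1.2, main2.2, main3.2, main4.2, main5.2, main6.2, main7.2]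
  · intro i i' h1 h2 h3 h4 h5
    rw [himg i h1 h2, himg i' h3 h4]
    exact disj_prod (Jdisj i i' h1 h2 h3 h4 h5)
  · have hs := s_gt
    have hs' := s_lt
    have hjj : ∀ k : ℕ, 1 ≤ k → k ≤ 7 → jmap (jmap k) = k ∧ 1 ≤ jmap k ∧ jmap k ≤ 7 := by
      intro k h1 h7; interval_cases k <;> simp [jmap]
    apply measure_mono_null (t := (univ : Set ℝ) ×ˢ
      ({1 + 2*R2, 3 + R2, 2 + 2*R2, 1 + 3*R2, 3 + 2*R2, 3 + 3*R2} : Set ℝ))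
    · rintro ⟨x, y⟩ ⟨⟨hx, hy⟩, hnot⟩
      have hx' : x < 1 + R2 := hx
      have hy' : 1 + R2 < y := hy
      have key : ∀ k : ℕ, 1 ≤ k → k ≤ 7 → y ∉ mob gam '' sInt k := by
        intro k h1 h7 hymem
        obtain ⟨hkk, hj1, hj7⟩ := hjj k h1 h7
        apply hnot
        refine Set.mem_iUnion₂.mpr ⟨jmap k, Finset.mem_Icc.mpr ⟨hj1, hj7⟩, ?_⟩
        rw [himg (jmap k) hj1 hj7, hkk]
        exact ⟨hx, hymem⟩
      have n1 : y ∉ Ioo (1 + R2) (1 + 2*R2) := by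
        have h := key 1 (by norm_num) (by norm_num); rwa [gamImg1] at h
      have n2 : y ∉ Ioo (1 + 2*R2) (3 + R2) := by
        have h := key 2 (by norm_num) (by norm_num); rwa [gamImg2] at h
      have n3 : y ∉ Ioo (3 + R2) (2 + 2*R2) := by
        have h := key 3 (by norm_num) (by norm_num); rwa [gamImg3] at h
      have n4 : y ∉ Ioo (2 + 2*R2) (1 + 3*R2) := by
        have h := key 4 (by norm_num) (by norm_num); rwa [gamImg4] at h
      have n5 : y ∉ Ioo (1 + 3*R2) (3 + 2*R2) := by
        have h := key 5 (by norm_num) (by norm_num); rwa [gamImg5] at h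
      have n6 : y ∉ Ioo (3 + 2*R2) (3 + 3*R2) := by
        have h := key 6 (by norm_num) (by norm_num); rwa [gamImg6] at h
      have n7 : y ∉ Ioi (3 + 3*R2) := by
        have h := key 7 (by norm_num) (by norm_num); rwa [gamImg7] at h
      refine ⟨trivial, ?_⟩
      simp only [mem_insert_iff, mem_singleton_iff]
      by_contra hc
      push_neg at hc
      obtain ⟨c1, c2, c3, c4, c5, c6⟩ := hc
      have b1 : 1 + 2*R2 ≤ y := not_lt.mp (fun h => n1 ⟨by linarith, h⟩)
      have b2 : 3 + R2 ≤ y := not_lt.mp (fun h => n2 ⟨lt_of_le_of_ne b1 (Ne.symm c1), h⟩)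
      have b3 : 2 + 2*R2 ≤ y := not_lt.mp (fun h => n3 ⟨lt_of_le_of_ne b2 (Ne.symm c2), h⟩)
      have b4 : 1 + 3*R2 ≤ y := not_lt.mp (fun h => n4 ⟨lt_of_le_of_ne b3 (Ne.symm c3), h⟩)
      have b5 : 3 + 2*R2 ≤ y := not_lt.mp (fun h => n5 ⟨lt_of_le_of_ne b4 (Ne.symm c4), h⟩)
      have b6 : 3 + 3*R2 ≤ y := not_lt.mp (fun h => n6 ⟨lt_of_le_of_ne b5 (Ne.symm c5), h⟩)
      exact n7 (mem_Ioi.mpr (lt_of_le_of_ne b6 (Ne.symm c6)))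
    · rw [show (volume : Measure (ℝ × ℝ)) = (volume : Measure ℝ).prod volume from
        MeasureTheory.Measure.volume_eq_prod ℝ ℝ, MeasureTheory.Measure.prod_prod]
      have hfin : ({1 + 2*R2, 3 + R2, 2 + 2*R2, 1 + 3*R2, 3 + 2*R2, 3 + 3*R2} : Set ℝ).Finite :=
        Set.toFinite _
      rw [hfin.measure_zero volume, mul_zero]
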